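/- Let A be ν×ν, B be ν×m, C be p×ν, D be p×m complex matrices with R = [[A, B], [C, D]] satisfying R* R = I_{ν+m}, and assume every eigenvalue of A has modulus strictly less than 1. Then: (a) any ν×ν complex matrix W satisfying the Stein equation W − A* W A = C* C equals I_ν (i.e., the observability Gramian is the identity); (b) any Hermitian ν×ν matrix W satisfying the Stein equation W − A W A* = B B* satisfies W ≤ I_ν, i.e., I_ν − W is positive semidefinite (the controllability Gramian is a contraction). -/

import Mathlib

open Matrix ComplexOrder

section Aux

open Filter Topology
open scoped ENNReal NNReal

attribute [local instance] Matrix.frobeniusNormedAddCommGroup Matrix.frobeniusNormedRing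
  Matrix.frobeniusNormedSpace Matrix.frobeniusNormedAlgebra

private lemma frob_entry_le {n m : ℕ} (M : Matrix (Fin n) (Fin m) ℂ) (i : Fin n) (j : Fin m) :
    ‖M i j‖ ≤ ‖M‖ := by
  rw [← coe_nnnorm, ← coe_nnnorm, NNReal.coe_le_coe, Matrix.frobenius_nnnorm_def]
  have h1 : ‖M i j‖₊ = (‖M i j‖₊ ^ (2:ℝ)) ^ ((1:ℝ)/2) := by
    rw [← NNReal.rpow_mul]; norm_num
  rw [h1]
  refine NNReal.rpow_le_rpow ?_ (by norm_num)
  calc ‖M i j‖₊ ^ (2:ℝ) ≤ ∑ j', ‖M i j'‖₊ ^ (2:ℝ) :=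
        Finset.single_le_sum (f := fun j' => ‖M i j'‖₊ ^ (2:ℝ)) (fun _ _ => zero_le)
          (Finset.mem_univ j)
    _ ≤ ∑ i', ∑ j', ‖M i' j'‖₊ ^ (2:ℝ) :=
        Finset.single_le_sum (f := fun i' => ∑ j', ‖M i' j'‖₊ ^ (2:ℝ))
          (fun _ _ => zero_le) (Finset.mem_univ i)

private lemma pow_norm_tendsto {n : ℕ} (A : Matrix (Fin n) (Fin n) ℂ)
    (hA : ∀ μ ∈ spectrum ℂ A, ‖μ‖ < 1) :
    Tendsto (fun N : ℕ => ‖A ^ N‖) atTop (𝓝 0) := by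
  have hρ : spectralRadius ℂ A < 1 := by
    rcases (spectrum ℂ A).eq_empty_or_nonempty with h | h
    · simp [spectralRadius, h]
    · obtain ⟨z, hz, hz'⟩ := spectrum.exists_nnnorm_eq_spectralRadius_of_nonempty h
      rw [← hz']
      have := hA z hz
      rw [← coe_nnnorm] at this
      exact_mod_cast this
  obtain ⟨r, hr1, hr2⟩ := exists_between hρ
  have hrtop : r ≠ ⊤ := (hr2.trans_le le_top).ne
  have hgel := spectrum.pow_nnnorm_pow_one_div_tendsto_nhds_spectralRadius A
  have hev : ∀ᶠ N : ℕ in atTop, (‖A ^ N‖₊ : ℝ≥0∞) ^ (1 / (N:ℝ)) < r :=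
    hgel.eventually_lt_const hr1
  have hbound : ∀ᶠ N in atTop, ‖A ^ N‖ ≤ r.toReal ^ N := by
    filter_upwards [hev, eventually_ge_atTop 1] with N hN hN1
    have h1 : (‖A ^ N‖₊ : ℝ≥0∞) ≤ r ^ N := by
      have h2 := ENNReal.rpow_le_rpow hN.le (by positivity : (0:ℝ) ≤ (N:ℝ))
      rwa [← ENNReal.rpow_mul,
        one_div_mul_cancel (by exact_mod_cast Nat.one_le_iff_ne_zero.mp hN1 : (N:ℝ) ≠ 0),
        ENNReal.rpow_one, ENNReal.rpow_natCast] at h2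
    have h3 := ENNReal.toReal_mono (by simp [ENNReal.pow_ne_top hrtop]) h1
    rwa [ENNReal.coe_toReal, coe_nnnorm, ENNReal.toReal_pow] at h3
  have hr1' : r.toReal < 1 := by
    rw [← ENNReal.toReal_one, ENNReal.toReal_lt_toReal hrtop (by simp)]
    exact hr2
  exact squeeze_zero' (Eventually.of_forall fun _ => norm_nonneg _) hbound
    (tendsto_pow_atTop_nhds_zero_of_lt_one ENNReal.toReal_nonneg hr1')

private lemma dot_bound {n : ℕ} (x : Fin n → ℂ) (M : Matrix (Fin n) (Fin n) ℂ) :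
    ‖star x ⬝ᵥ M.mulVec x‖ ≤ (∑ i, ‖x i‖)^2 * ‖M‖ := by
  have h1 : ∀ i, ‖star x i * M.mulVec x i‖ ≤ ‖x i‖ * (‖M‖ * ∑ j, ‖x j‖) := by
    intro i
    rw [norm_mul, Pi.star_apply, norm_star]
    refine mul_le_mul_of_nonneg_left ?_ (norm_nonneg _)
    calc ‖M.mulVec x i‖ = ‖∑ j, M i j * x j‖ := by simp [Matrix.mulVec, dotProduct]
      _ ≤ ∑ j, ‖M i j * x j‖ := norm_sum_le _ _
      _ ≤ ∑ j, ‖M‖ * ‖x j‖ := Finset.sum_le_sum fun j _ => by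
            rw [norm_mul]
            exact mul_le_mul_of_nonneg_right (frob_entry_le M i j) (norm_nonneg _)
      _ = ‖M‖ * ∑ j, ‖x j‖ := by rw [Finset.mul_sum]
  calc ‖star x ⬝ᵥ M.mulVec x‖ ≤ ∑ i, ‖star x i * M.mulVec x i‖ := norm_sum_le _ _
    _ ≤ ∑ i, ‖x i‖ * (‖M‖ * ∑ j, ‖x j‖) := Finset.sum_le_sum fun i _ => h1 i
    _ = (∑ i, ‖x i‖)^2 * ‖M‖ := by rw [← Finset.sum_mul]; ring

private lemma stein_iter {n : ℕ} (A X Q : Matrix (Fin n) (Fin n) ℂ)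
    (h : X = A * X * Aᴴ + Q) (N : ℕ) :
    X = A ^ N * X * (Aᴴ) ^ N + ∑ k ∈ Finset.range N, A ^ k * Q * (Aᴴ) ^ k := by
  induction N with
  | zero => simp
  | succ N ih =>
    rw [Finset.sum_range_succ]
    calc X = A ^ N * X * Aᴴ ^ N + ∑ k ∈ Finset.range N, A ^ k * Q * Aᴴ ^ k := ih
      _ = A ^ N * (A * X * Aᴴ + Q) * Aᴴ ^ N + ∑ k ∈ Finset.range N, A ^ k * Q * Aᴴ ^ k := by
          rw [← h]
      _ = A ^ (N+1) * X * Aᴴ ^ (N+1) + (∑ k ∈ Finset.range N, A ^ k * Q * Aᴴ ^ k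
            + A ^ N * Q * Aᴴ ^ N) := by
          rw [pow_succ A, pow_succ' (Aᴴ)]
          noncomm_ring

/-- if `R = [[A, B], [C, D]]` satisfies `Rᴴ R = I` and `A` is Schur
stable (all eigenvalues in the open unit disk), then the observability Gramian is
the identity and the controllability Gramian is bounded above by the identity. -/
theorem isometric_realization_gramians
    (ν p m : ℕ)
    (A : Matrix (Fin ν) (Fin ν) ℂ) (B : Matrix (Fin ν) (Fin m) ℂ)
    (C : Matrix (Fin p) (Fin ν) ℂ) (D : Matrix (Fin p) (Fin m) ℂ)
    (hR : (Matrix.fromBlocks A B C D)ᴴ * Matrix.fromBlocks A B C D = 1)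
    (hA : ∀ μ ∈ spectrum ℂ A, ‖μ‖ < 1) :
    (∀ W : Matrix (Fin ν) (Fin ν) ℂ, W - Aᴴ * W * A = Cᴴ * C → W = 1) ∧
    (∀ W : Matrix (Fin ν) (Fin ν) ℂ, Wᴴ = W → W - A * W * Aᴴ = B * Bᴴ →
      (1 - W).PosSemidef) := by
  have hpow := pow_norm_tendsto A hA
  have h11 : Aᴴ * A + Cᴴ * C = 1 := by
    have hRb : Matrix.fromBlocks (Aᴴ*A + Cᴴ*C) (Aᴴ*B + Cᴴ*D) (Bᴴ*A + Dᴴ*C) (Bᴴ*B + Dᴴ*D)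
        = Matrix.fromBlocks (1 : Matrix (Fin ν) (Fin ν) ℂ) 0 0 (1 : Matrix (Fin m) (Fin m) ℂ) := by
      rw [Matrix.fromBlocks_one, ← hR, Matrix.fromBlocks_conjTranspose, Matrix.fromBlocks_multiply]
    have := congrArg Matrix.toBlocks₁₁ hRb
    rwa [Matrix.toBlocks_fromBlocks₁₁, Matrix.toBlocks_fromBlocks₁₁] at this
  constructor
  · -- observability Gramian is the identity
    intro W hW
    set X := W - 1 with hXdef
    have e2 : X = Aᴴ * X * (Aᴴ)ᴴ + 0 := by
      rw [conjTranspose_conjTranspose, add_zero]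
      have hC : Cᴴ * C = 1 - Aᴴ * A := by rw [← h11]; noncomm_ring
      have e1 : X - Aᴴ * X * A = (W - Aᴴ * W * A) - (1 - Aᴴ * A) := by
        rw [hXdef]; noncomm_ring
      rw [hW, hC, sub_self] at e1
      rwa [sub_eq_zero] at e1
    have hXn : ∀ N : ℕ, ‖X‖ ≤ ‖A ^ N‖ * ‖X‖ * ‖A ^ N‖ := by
      intro N
      have h := stein_iter Aᴴ X 0 e2 N
      simp only [Matrix.mul_zero, Matrix.zero_mul, Finset.sum_const_zero, add_zero,
        conjTranspose_conjTranspose] at h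
      calc ‖X‖ = ‖(Aᴴ) ^ N * X * A ^ N‖ := by rw [← h]
        _ ≤ ‖(Aᴴ) ^ N‖ * ‖X‖ * ‖A ^ N‖ :=
            (Matrix.frobenius_norm_mul _ _).trans
              (mul_le_mul_of_nonneg_right (Matrix.frobenius_norm_mul _ _) (norm_nonneg _))
        _ = ‖A ^ N‖ * ‖X‖ * ‖A ^ N‖ := by
            rw [← Matrix.conjTranspose_pow, Matrix.frobenius_norm_conjTranspose]
    have hlim : Filter.Tendsto (fun N : ℕ => ‖A ^ N‖ * ‖X‖ * ‖A ^ N‖) atTop (𝓝 0) := by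
      have := (hpow.mul_const ‖X‖).mul hpow
      simpa using this
    have hX0 : ‖X‖ ≤ 0 := ge_of_tendsto hlim (Filter.Eventually.of_forall hXn)
    have : X = 0 := norm_le_zero_iff.mp hX0
    rw [hXdef] at this
    exact sub_eq_zero.mp this
  · -- controllability Gramian is a contraction
    intro W hWh hW
    set Rm := Matrix.fromBlocks A B C D with hRm
    have hP : (1 - Rm * Rmᴴ).PosSemidef := by
      have hPP : Rm * Rmᴴ * (Rm * Rmᴴ) = Rm * Rmᴴ := by
        rw [Matrix.mul_assoc, ← Matrix.mul_assoc Rmᴴ, hR, Matrix.one_mul]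
      have key : 1 - Rm * Rmᴴ = (1 - Rm * Rmᴴ)ᴴ * (1 - Rm * Rmᴴ) := by
        simp only [conjTranspose_sub, conjTranspose_one, conjTranspose_mul,
          conjTranspose_conjTranspose, Matrix.sub_mul, Matrix.mul_sub, Matrix.mul_one,
          Matrix.one_mul, hPP]
        abel
      rw [key]
      exact Matrix.posSemidef_conjTranspose_mul_self _
    have hQ : (1 - (A * Aᴴ + B * Bᴴ)).PosSemidef := by
      have hsub := hP.submatrix Sum.inl
      have heq : (1 - Rm * Rmᴴ).submatrix Sum.inl Sum.inl = 1 - (A * Aᴴ + B * Bᴴ) := by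
        rw [hRm, Matrix.fromBlocks_conjTranspose, Matrix.fromBlocks_multiply]
        ext i j
        simp [Matrix.submatrix, Matrix.one_apply]
      rwa [heq] at hsub
    set Q := 1 - (A * Aᴴ + B * Bᴴ) with hQdef
    set X := 1 - W with hXdef
    have hXh : Xᴴ = X := by rw [hXdef, conjTranspose_sub, conjTranspose_one, hWh]
    have hXeq : X = A * X * Aᴴ + Q := by
      have e1 : X - A * X * Aᴴ = (1 - A * Aᴴ) - (W - A * W * Aᴴ) := by
        rw [hXdef]; noncomm_ring
      rw [hW] at e1
      have e2 : X - A * X * Aᴴ = Q := by rw [e1, hQdef]; noncomm_ring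
      rw [← e2]; noncomm_ring
    have hS : ∀ N : ℕ, (∑ k ∈ Finset.range N, A ^ k * Q * (Aᴴ) ^ k).PosSemidef := by
      intro N
      induction N with
      | zero => simpa using Matrix.PosSemidef.zero
      | succ N ih =>
        rw [Finset.sum_range_succ]
        refine ih.add ?_
        have := hQ.mul_mul_conjTranspose_same (A ^ N)
        rwa [Matrix.conjTranspose_pow] at this
    refine Matrix.PosSemidef.of_dotProduct_mulVec_nonneg hXh (fun x => ?_)
    set z := star x ⬝ᵥ X.mulVec x with hzdef
    -- z is real
    have hzstar : star z = z := by
      calc star z = star (star x ⬝ᵥ X *ᵥ x) := by rw [hzdef]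
        _ = star (X *ᵥ x) ⬝ᵥ x := by rw [star_dotProduct, star_star]
        _ = star x ᵥ* Xᴴ ⬝ᵥ x := by rw [star_mulVec]
        _ = star x ⬝ᵥ Xᴴ *ᵥ x := by rw [← dotProduct_mulVec]
        _ = z := by rw [hXh, hzdef]
    have hzim : z.im = 0 := by
      rw [Complex.star_def] at hzstar
      exact (Complex.conj_eq_iff_im.mp hzstar)
    -- z.re is nonneg via the limit
    set t := fun N : ℕ => star x ⬝ᵥ (A ^ N * X * (Aᴴ) ^ N).mulVec x with htdef
    have hsplit : ∀ N : ℕ, z = t N + star x ⬝ᵥ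
        ((∑ k ∈ Finset.range N, A ^ k * Q * (Aᴴ) ^ k).mulVec x) := by
      intro N
      rw [hzdef]
      conv_lhs => rw [stein_iter A X Q hXeq N]
      rw [Matrix.add_mulVec, dotProduct_add]
    have hre : ∀ N : ℕ, (t N).re ≤ z.re := by
      intro N
      have hs := (hS N).dotProduct_mulVec_nonneg x
      have := congrArg Complex.re (hsplit N)
      rw [Complex.add_re] at this
      have hsre : 0 ≤ (star x ⬝ᵥ ((∑ k ∈ Finset.range N, A ^ k * Q * (Aᴴ) ^ k).mulVec x)).re :=
        (Complex.le_def.mp hs).1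
      linarith
    have htlim : Filter.Tendsto (fun N => (t N).re) atTop (𝓝 0) := by
      have hg : Filter.Tendsto (fun N : ℕ => (∑ i, ‖x i‖)^2 * (‖A ^ N‖ * ‖X‖ * ‖A ^ N‖))
          atTop (𝓝 0) := by
        have := ((hpow.mul_const ‖X‖).mul hpow).const_mul ((∑ i, ‖x i‖)^2)
        simpa using this
      refine squeeze_zero_norm (fun N => ?_) hg
      calc ‖(t N).re‖ ≤ ‖t N‖ := by
              rw [Real.norm_eq_abs]
              exact Complex.abs_re_le_norm _
          _ ≤ (∑ i, ‖x i‖)^2 * ‖A ^ N * X * (Aᴴ) ^ N‖ := dot_bound x _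
          _ ≤ (∑ i, ‖x i‖)^2 * (‖A ^ N‖ * ‖X‖ * ‖A ^ N‖) := by
              refine mul_le_mul_of_nonneg_left ?_ (by positivity)
              calc ‖A ^ N * X * (Aᴴ) ^ N‖ ≤ ‖A ^ N‖ * ‖X‖ * ‖(Aᴴ) ^ N‖ :=
                    (Matrix.frobenius_norm_mul _ _).trans
                      (mul_le_mul_of_nonneg_right (Matrix.frobenius_norm_mul _ _) (norm_nonneg _))
                _ = ‖A ^ N‖ * ‖X‖ * ‖A ^ N‖ := by
                    rw [← Matrix.conjTranspose_pow, Matrix.frobenius_norm_conjTranspose]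
    have hzre : 0 ≤ z.re := le_of_tendsto htlim (Filter.Eventually.of_forall hre)
    rw [Complex.le_def]
    exact ⟨by simpa using hzre, by simp [hzim]⟩

end Aux
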